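/- arXiv:0810.1342 — 2 statements merged into one kernel-verified Lean document; each statement's English description precedes it below -/
import Mathlib

section
/- Let m ∉ {1,2,3,7,11} be a square-free positive integer and 𝒪 the ring of integers of ℚ(√-m). Then the binary Hermitian lattice ⟨1,3⟩ is not represented by ⟨1,1,1⟩ over 𝒪, and the binary Hermitian lattice ⟨3,3⟩ is not represented by ⟨1,1,2⟩ over 𝒪. -/
open Complex Matrix

/-- ω for ℚ(√-m): √-m if m ≡ 1,2 (mod 4), (1+√-m)/2 if m ≡ 3 (mod 4). -/
noncomputable def omg (m : ℕ) : ℂ :=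
  if m % 4 = 3 then (1 + Real.sqrt m * Complex.I) / 2 else Real.sqrt m * Complex.I

/-- The ring of integers 𝒪 = ℤ[ω] of ℚ(√-m), as a subring of ℂ. -/
noncomputable def ringO (m : ℕ) : Subalgebra ℤ ℂ := Algebra.adjoin ℤ {omg m}

lemma sqrtmI_sq (m : ℕ) : (((Real.sqrt m : ℝ) : ℂ) * Complex.I) ^ 2 = -(m : ℂ) := by
  have : ((Real.sqrt m : ℝ) : ℂ) ^ 2 = (m : ℂ) := by
    norm_cast
    exact_mod_cast Real.sq_sqrt (by positivity : (0:ℝ) ≤ m)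
  rw [mul_pow, this, Complex.I_sq]; ring

lemma omg_sq (m : ℕ) : ∃ c d : ℤ, (omg m) ^ 2 = c + d * omg m := by
  have hm2 := sqrtmI_sq m
  by_cases h : m % 4 = 3
  · refine ⟨-(((m+1)/4 : ℕ) : ℤ), 1, ?_⟩
    have h4 : (((m+1)/4 : ℕ) : ℂ) * 4 = (m : ℂ) + 1 := by
      have : ((m+1)/4 : ℕ) * 4 = m + 1 := Nat.div_mul_cancel (by omega)
      exact_mod_cast this
    rw [omg, if_pos h]
    simp only [Int.cast_neg, Int.cast_natCast, Int.cast_one]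
    linear_combination hm2 / 4 + h4 / 4
  · refine ⟨-(m : ℤ), 0, ?_⟩
    rw [omg, if_neg h]
    simp only [Int.cast_neg, Int.cast_natCast, Int.cast_zero]
    linear_combination hm2

lemma ringO_mem {m : ℕ} {z : ℂ} (hz : z ∈ ringO m) : ∃ a b : ℤ, z = a + b * omg m := by
  obtain ⟨c, d, hcd⟩ := omg_sq m
  induction hz using Algebra.adjoin_induction with
  | mem x hx =>
    simp only [Set.mem_singleton_iff] at hx
    exact ⟨0, 1, by simp [hx]⟩
  | algebraMap r => exact ⟨r, 0, by simp⟩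
  | add x y _ _ ihx ihy =>
    obtain ⟨a, b, rfl⟩ := ihx; obtain ⟨a', b', rfl⟩ := ihy
    exact ⟨a + a', b + b', by push_cast; ring⟩
  | mul x y _ _ ihx ihy =>
    obtain ⟨a, b, rfl⟩ := ihx; obtain ⟨a', b', rfl⟩ := ihy
    exact ⟨a * a' + b * b' * c, a * b' + b * a' + b * b' * d, by
      push_cast; linear_combination (b : ℂ) * (b' : ℂ) * hcd⟩

lemma omg_im_of (m : ℕ) (h : m % 4 = 3) : (omg m).im = Real.sqrt m / 2 := by
  rw [omg, if_pos h]; simp [Complex.div_im]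

lemma omg_im_of' (m : ℕ) (h : ¬ m % 4 = 3) : (omg m).im = Real.sqrt m := by
  rw [omg, if_neg h]; simp

/-- In `𝒪`, any element of norm at most 3 is a rational integer. -/
lemma key (m : ℕ) (hm : 0 < m) (hsf : Squarefree m)
    (hne : m ∉ ({1, 2, 3, 7, 11} : Set ℕ)) {z : ℂ} (hz : z ∈ ringO m)
    (h3 : Complex.normSq z ≤ 3) : ∃ n : ℤ, z = n := by
  simp only [Set.mem_insert_iff, Set.mem_singleton_iff, not_or] at hne
  obtain ⟨h1, h2, h3', h7, h11⟩ := hne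
  obtain ⟨a, b, rfl⟩ := ringO_mem hz
  rcases eq_or_ne b 0 with rfl | hb
  · exact ⟨a, by simp⟩
  exfalso
  have him : ((a : ℂ) + b * omg m).im = (b : ℝ) * (omg m).im := by simp
  have hsq : Real.sqrt m ^ 2 = m := Real.sq_sqrt (by positivity)
  have hb1 : (1 : ℝ) ≤ (b : ℝ) ^ 2 := by
    have : (1 : ℤ) ≤ b ^ 2 := by
      nlinarith [Int.one_le_abs hb, _root_.sq_abs b, abs_nonneg b]
    exact_mod_cast this
  have hge : ((a : ℂ) + b * omg m).im ^ 2 ≤ Complex.normSq ((a : ℂ) + b * omg m) := by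
    rw [Complex.normSq_apply]; nlinarith [sq_nonneg ((a : ℂ) + b * omg m).re]
  by_cases h : m % 4 = 3
  · have hm15 : 15 ≤ m := by omega
    rw [him, omg_im_of m h] at hge
    have : ((b:ℝ) * (Real.sqrt m / 2)) ^ 2 = (b:ℝ)^2 * (m : ℝ) / 4 := by
      rw [mul_pow, div_pow, hsq]; ring
    rw [this] at hge
    have hmr : (15 : ℝ) ≤ m := by exact_mod_cast hm15
    nlinarith
  · have hm4 : m ≠ 4 := by
      rintro rfl
      exact absurd (hsf 2 (by norm_num)) (by norm_num)
    have hm5 : 5 ≤ m := by omega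
    rw [him, omg_im_of' m h] at hge
    have : ((b:ℝ) * Real.sqrt m) ^ 2 = (b:ℝ)^2 * (m : ℝ) := by rw [mul_pow, hsq]
    rw [this] at hge
    have hmr : (5 : ℝ) ≤ m := by exact_mod_cast hm5
    nlinarith

lemma int_case1 (a0 a1 a2 b0 b1 b2 : ℤ)
    (ea : a0*a0 + a1*a1 + a2*a2 = 1) (eb : b0*b0 + b1*b1 + b2*b2 = 3)
    (ec : a0*b0 + a1*b1 + a2*b2 = 0) : False := by
  have ba0 : -1 ≤ a0 ∧ a0 ≤ 1 := by
    constructor <;> nlinarith [mul_self_nonneg a0, mul_self_nonneg a1, mul_self_nonneg a2]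
  have ba1 : -1 ≤ a1 ∧ a1 ≤ 1 := by
    constructor <;> nlinarith [mul_self_nonneg a0, mul_self_nonneg a1, mul_self_nonneg a2]
  have ba2 : -1 ≤ a2 ∧ a2 ≤ 1 := by
    constructor <;> nlinarith [mul_self_nonneg a0, mul_self_nonneg a1, mul_self_nonneg a2]
  have bb0 : -1 ≤ b0 ∧ b0 ≤ 1 := by
    constructor <;> nlinarith [mul_self_nonneg b0, mul_self_nonneg b1, mul_self_nonneg b2]
  have bb1 : -1 ≤ b1 ∧ b1 ≤ 1 := by
    constructor <;> nlinarith [mul_self_nonneg b0, mul_self_nonneg b1, mul_self_nonneg b2]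
  have bb2 : -1 ≤ b2 ∧ b2 ≤ 1 := by
    constructor <;> nlinarith [mul_self_nonneg b0, mul_self_nonneg b1, mul_self_nonneg b2]
  obtain ⟨l0,r0⟩ := ba0; obtain ⟨l1,r1⟩ := ba1; obtain ⟨l2,r2⟩ := ba2
  obtain ⟨m0,s0⟩ := bb0; obtain ⟨m1,s1⟩ := bb1; obtain ⟨m2,s2⟩ := bb2
  interval_cases a0 <;> interval_cases a1 <;> interval_cases a2 <;>
    interval_cases b0 <;> interval_cases b1 <;> interval_cases b2 <;> omega

lemma int_case2 (a0 a1 a2 b0 b1 b2 : ℤ)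
    (ea : a0*a0 + a1*a1 + 2*(a2*a2) = 3) (eb : b0*b0 + b1*b1 + 2*(b2*b2) = 3)
    (ec : a0*b0 + a1*b1 + 2*(a2*b2) = 0) : False := by
  have ba0 : -1 ≤ a0 ∧ a0 ≤ 1 := by
    constructor <;> nlinarith [mul_self_nonneg a0, mul_self_nonneg a1, mul_self_nonneg a2]
  have ba1 : -1 ≤ a1 ∧ a1 ≤ 1 := by
    constructor <;> nlinarith [mul_self_nonneg a0, mul_self_nonneg a1, mul_self_nonneg a2]
  have ba2 : -1 ≤ a2 ∧ a2 ≤ 1 := by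
    constructor <;> nlinarith [mul_self_nonneg a0, mul_self_nonneg a1, mul_self_nonneg a2]
  have bb0 : -1 ≤ b0 ∧ b0 ≤ 1 := by
    constructor <;> nlinarith [mul_self_nonneg b0, mul_self_nonneg b1, mul_self_nonneg b2]
  have bb1 : -1 ≤ b1 ∧ b1 ≤ 1 := by
    constructor <;> nlinarith [mul_self_nonneg b0, mul_self_nonneg b1, mul_self_nonneg b2]
  have bb2 : -1 ≤ b2 ∧ b2 ≤ 1 := by
    constructor <;> nlinarith [mul_self_nonneg b0, mul_self_nonneg b1, mul_self_nonneg b2]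
  obtain ⟨l0,r0⟩ := ba0; obtain ⟨l1,r1⟩ := ba1; obtain ⟨l2,r2⟩ := ba2
  obtain ⟨m0,s0⟩ := bb0; obtain ⟨m1,s1⟩ := bb1; obtain ⟨m2,s2⟩ := bb2
  interval_cases a0 <;> interval_cases a1 <;> interval_cases a2 <;>
    interval_cases b0 <;> interval_cases b1 <;> interval_cases b2 <;> omega

theorem diag13_and_diag33_not_represented (m : ℕ) (hm : 0 < m) (hsf : Squarefree m)
    (hne : m ∉ ({1, 2, 3, 7, 11} : Set ℕ)) :
    (¬∃ X : Matrix (Fin 2) (Fin 3) ℂ, (∀ i j, X i j ∈ ringO m) ∧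
      !![(1 : ℂ), 0; 0, 3] = X * Xᴴ) ∧
    (¬∃ X : Matrix (Fin 2) (Fin 3) ℂ, (∀ i j, X i j ∈ ringO m) ∧
      !![(3 : ℂ), 0; 0, 3] = X * Matrix.diagonal ![(1 : ℂ), 1, 2] * Xᴴ) := by
  constructor
  · rintro ⟨X, hX, h⟩
    have h00 := congrFun (congrFun h 0) 0
    have h11 := congrFun (congrFun h 1) 1
    have h01 := congrFun (congrFun h 0) 1
    simp [Matrix.mul_apply, Fin.sum_univ_three, Matrix.conjTranspose_apply] at h00 h11 h01
    have h00' := h00; have h11' := h11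
    simp only [Complex.mul_conj] at h00' h11'
    have e0 : Complex.normSq (X 0 0) + Complex.normSq (X 0 1) + Complex.normSq (X 0 2)
        = 1 := by exact_mod_cast h00'.symm
    have e1 : Complex.normSq (X 1 0) + Complex.normSq (X 1 1) + Complex.normSq (X 1 2)
        = 3 := by exact_mod_cast h11'.symm
    have nn : ∀ i j, 0 ≤ Complex.normSq (X i j) := fun i j => Complex.normSq_nonneg _
    obtain ⟨a0, ha0⟩ := key m hm hsf hne (hX 0 0) (by have := nn 0 1; have := nn 0 2; linarith)
    obtain ⟨a1, ha1⟩ := key m hm hsf hne (hX 0 1) (by have := nn 0 0; have := nn 0 2; linarith)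
    obtain ⟨a2, ha2⟩ := key m hm hsf hne (hX 0 2) (by have := nn 0 0; have := nn 0 1; linarith)
    obtain ⟨b0, hb0⟩ := key m hm hsf hne (hX 1 0) (by have := nn 1 1; have := nn 1 2; linarith)
    obtain ⟨b1, hb1⟩ := key m hm hsf hne (hX 1 1) (by have := nn 1 0; have := nn 1 2; linarith)
    obtain ⟨b2, hb2⟩ := key m hm hsf hne (hX 1 2) (by have := nn 1 0; have := nn 1 1; linarith)
    simp only [ha0, ha1, ha2, hb0, hb1, hb2] at h00 h11 h01
    simp only [map_intCast] at h00 h11 h01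
    refine int_case1 a0 a1 a2 b0 b1 b2 ?_ ?_ ?_
    · have hc : ((a0*a0 + a1*a1 + a2*a2 : ℤ) : ℂ) = ((1 : ℤ) : ℂ) := by
        push_cast; linear_combination h00.symm
      exact_mod_cast hc
    · have hc : ((b0*b0 + b1*b1 + b2*b2 : ℤ) : ℂ) = ((3 : ℤ) : ℂ) := by
        push_cast; linear_combination h11.symm
      exact_mod_cast hc
    · have hc : ((a0*b0 + a1*b1 + a2*b2 : ℤ) : ℂ) = ((0 : ℤ) : ℂ) := by
        push_cast; linear_combination h01.symm
      exact_mod_cast hc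
  · rintro ⟨X, hX, h⟩
    have h00 := congrFun (congrFun h 0) 0
    have h11 := congrFun (congrFun h 1) 1
    have h01 := congrFun (congrFun h 0) 1
    simp [Matrix.mul_apply, Fin.sum_univ_three, Matrix.conjTranspose_apply,
      Matrix.diagonal] at h00 h11 h01
    have h00' := h00; have h11' := h11
    have mc : ∀ (z : ℂ) (c : ℂ), z * c * (starRingEnd ℂ) z = c * Complex.normSq z := by
      intro z c
      rw [mul_comm z c, mul_assoc, Complex.mul_conj]
    simp only [mc, Complex.mul_conj] at h00' h11'
    have e0 : Complex.normSq (X 0 0) + Complex.normSq (X 0 1) + 2 * Complex.normSq (X 0 2)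
        = 3 := by
      have := h00'.symm
      push_cast at this ⊢
      exact_mod_cast this
    have e1 : Complex.normSq (X 1 0) + Complex.normSq (X 1 1) + 2 * Complex.normSq (X 1 2)
        = 3 := by
      have := h11'.symm
      push_cast at this ⊢
      exact_mod_cast this
    have nn : ∀ i j, 0 ≤ Complex.normSq (X i j) := fun i j => Complex.normSq_nonneg _
    obtain ⟨a0, ha0⟩ := key m hm hsf hne (hX 0 0) (by have := nn 0 1; have := nn 0 2; linarith)
    obtain ⟨a1, ha1⟩ := key m hm hsf hne (hX 0 1) (by have := nn 0 0; have := nn 0 2; linarith)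
    obtain ⟨a2, ha2⟩ := key m hm hsf hne (hX 0 2) (by have := nn 0 0; have := nn 0 1; linarith)
    obtain ⟨b0, hb0⟩ := key m hm hsf hne (hX 1 0) (by have := nn 1 1; have := nn 1 2; linarith)
    obtain ⟨b1, hb1⟩ := key m hm hsf hne (hX 1 1) (by have := nn 1 0; have := nn 1 2; linarith)
    obtain ⟨b2, hb2⟩ := key m hm hsf hne (hX 1 2) (by have := nn 1 0; have := nn 1 1; linarith)
    simp only [ha0, ha1, ha2, hb0, hb1, hb2] at h00 h11 h01
    simp only [map_intCast] at h00 h11 h01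
    refine int_case2 a0 a1 a2 b0 b1 b2 ?_ ?_ ?_
    · have hc : ((a0*a0 + a1*a1 + 2*(a2*a2) : ℤ) : ℂ) = ((3 : ℤ) : ℂ) := by
        push_cast; linear_combination h00.symm
      exact_mod_cast hc
    · have hc : ((b0*b0 + b1*b1 + 2*(b2*b2) : ℤ) : ℂ) = ((3 : ℤ) : ℂ) := by
        push_cast; linear_combination h11.symm
      exact_mod_cast hc
    · have hc : ((a0*b0 + a1*b1 + 2*(a2*b2) : ℤ) : ℂ) = ((0 : ℤ) : ℂ) := by
        push_cast; linear_combination h01.symm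
      exact_mod_cast hc
end

section
/- Over the ring 𝒪 = ℤ[√-2], the binary Hermitian lattice with Gram matrix [[2,-1+√-2],[-1-√-2,2]] is not represented by the quaternary lattice ⟨1,1,1,a⟩ for any positive integer a. -/
open Complex Matrix

lemma omg_two : omg 2 = Real.sqrt 2 * I := by norm_num [omg]

lemma omg_sq_s19 : omg 2 * omg 2 = -2 := by
  rw [omg_two]
  have h : (Real.sqrt 2 : ℂ) * (Real.sqrt 2 : ℂ) = 2 := by
    rw [← Complex.ofReal_mul, Real.mul_self_sqrt (by norm_num)]; norm_num
  calc (↑(Real.sqrt 2) * I) * (↑(Real.sqrt 2) * I)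
      = (↑(Real.sqrt 2) * ↑(Real.sqrt 2)) * (I*I) := by ring
    _ = -2 := by rw [h, Complex.I_mul_I]; ring

lemma star_omg : star (omg 2) = - omg 2 := by rw [omg_two]; simp [Complex.star_def]

lemma mem_ringO (z : ℂ) (h : z ∈ ringO 2) : ∃ p q : ℤ, z = p + q * omg 2 := by
  induction h using Algebra.adjoin_induction with
  | mem x hx => exact ⟨0, 1, by simp at hx; simp [hx]⟩
  | algebraMap r => exact ⟨r, 0, by simp⟩
  | add x y hx hy ihx ihy =>
      obtain ⟨p, q, rfl⟩ := ihx; obtain ⟨r, s, rfl⟩ := ihy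
      exact ⟨p + r, q + s, by push_cast; ring⟩
  | mul x y hx hy ihx ihy =>
      obtain ⟨p, q, rfl⟩ := ihx; obtain ⟨r, s, rfl⟩ := ihy
      exact ⟨p*r - 2*(q*s), p*s + q*r, by push_cast; linear_combination (q:ℂ)*(s:ℂ) * omg_sq_s19⟩

lemma indep (r s : ℤ) (h : (r:ℂ) + s * omg 2 = 0) : r = 0 ∧ s = 0 := by
  rw [omg_two] at h
  have hre := congrArg Complex.re h
  have him := congrArg Complex.im h
  simp at hre him
  exact ⟨hre, him⟩

lemma perIndex (w A B C D : ℤ) (hw : 1 ≤ w) (hA : 0 ≤ A) (hB : 0 ≤ B)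
    (hrel : C^2 + 2*D^2 = A*B) (hA2 : w*A ≤ 2) (hB2 : w*B ≤ 2) (hD : D ≠ 0) :
    C = 0 ∧ w*A + w*B = 3 := by
  have hAle : A ≤ w*A := le_mul_of_one_le_left hA hw
  have hBle : B ≤ w*B := le_mul_of_one_le_left hB hw
  have hA2' : A ≤ 2 := hAle.trans hA2
  have hB2' : B ≤ 2 := hBle.trans hB2
  have hD1 : 1 ≤ D^2 := by
    have := Int.one_le_abs hD
    nlinarith [_root_.sq_abs D]
  have hCsq : C^2 ≤ 4 := by nlinarith
  have hC2 : -2 ≤ C ∧ C ≤ 2 := by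
    constructor <;> nlinarith [sq_nonneg (C+2), sq_nonneg (C-2)]
  have hDsq : D^2 ≤ 2 := by nlinarith
  have hD2 : -1 ≤ D ∧ D ≤ 1 := by
    constructor <;> nlinarith [sq_nonneg (D+1), sq_nonneg (D-1)]
  obtain ⟨hC2a, hC2b⟩ := hC2
  obtain ⟨hD2a, hD2b⟩ := hD2
  interval_cases A <;> interval_cases B <;> interval_cases C <;> interval_cases D <;> omega

lemma zeroIndex (A B C D : ℤ) (hrel : C^2 + 2*D^2 = A*B) (h0 : A = 0 ∨ B = 0) :
    C = 0 := by
  rcases h0 with rfl | rfl <;> nlinarith [sq_nonneg C, sq_nonneg D]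

lemma main_int (a : ℤ) (ha : 1 ≤ a)
    (p0 p1 p2 p3 q0 q1 q2 q3 r0 r1 r2 r3 s0 s1 s2 s3 : ℤ)
    (h1 : p0^2+2*q0^2 + (p1^2+2*q1^2) + (p2^2+2*q2^2) + a*(p3^2+2*q3^2) = 2)
    (h2 : r0^2+2*s0^2 + (r1^2+2*s1^2) + (r2^2+2*s2^2) + a*(r3^2+2*s3^2) = 2)
    (h3 : p0*r0+2*q0*s0 + (p1*r1+2*q1*s1) + (p2*r2+2*q2*s2) + a*(p3*r3+2*q3*s3) = -1)
    (h4 : q0*r0-p0*s0 + (q1*r1-p1*s1) + (q2*r2-p2*s2) + a*(q3*r3-p3*s3) = 1) : False := by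
  set A0 := p0^2+2*q0^2 with hA0
  set A1 := p1^2+2*q1^2 with hA1
  set A2 := p2^2+2*q2^2 with hA2
  set A3 := p3^2+2*q3^2 with hA3
  set B0 := r0^2+2*s0^2 with hB0
  set B1 := r1^2+2*s1^2 with hB1
  set B2 := r2^2+2*s2^2 with hB2
  set B3 := r3^2+2*s3^2 with hB3
  set C0 := p0*r0+2*q0*s0 with hC0
  set C1 := p1*r1+2*q1*s1 with hC1
  set C2 := p2*r2+2*q2*s2 with hC2
  set C3 := p3*r3+2*q3*s3 with hC3
  set D0 := q0*r0-p0*s0 with hD0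
  set D1 := q1*r1-p1*s1 with hD1
  set D2 := q2*r2-p2*s2 with hD2
  set D3 := q3*r3-p3*s3 with hD3
  have hrel0 : C0^2 + 2*D0^2 = A0*B0 := by rw [hA0,hB0,hC0,hD0]; ring
  have hrel1 : C1^2 + 2*D1^2 = A1*B1 := by rw [hA1,hB1,hC1,hD1]; ring
  have hrel2 : C2^2 + 2*D2^2 = A2*B2 := by rw [hA2,hB2,hC2,hD2]; ring
  have hrel3 : C3^2 + 2*D3^2 = A3*B3 := by rw [hA3,hB3,hC3,hD3]; ring
  have hA0n : 0 ≤ A0 := by positivity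
  have hA1n : 0 ≤ A1 := by positivity
  have hA2n : 0 ≤ A2 := by positivity
  have hA3n : 0 ≤ A3 := by positivity
  have hB0n : 0 ≤ B0 := by positivity
  have hB1n : 0 ≤ B1 := by positivity
  have hB2n : 0 ≤ B2 := by positivity
  have hB3n : 0 ≤ B3 := by positivity
  have haA3 : A3 ≤ a * A3 := le_mul_of_one_le_left hA3n ha
  have haB3 : B3 ≤ a * B3 := le_mul_of_one_le_left hB3n ha
  have haA3n : 0 ≤ a * A3 := by positivity
  have haB3n : 0 ≤ a * B3 := by positivity
  by_cases hd0 : D0 = 0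
  · by_cases hd1 : D1 = 0
    · by_cases hd2 : D2 = 0
      · have hd3 : D3 ≠ 0 := by
          intro h; rw [hd0, hd1, hd2, h] at h4; simp at h4
        obtain ⟨hC, hS⟩ := perIndex a A3 B3 C3 D3 ha hA3n hB3n hrel3 (by omega) (by omega) hd3
        have k0 : C0 = 0 := zeroIndex _ _ _ _ hrel0 (by omega)
        have k1 : C1 = 0 := zeroIndex _ _ _ _ hrel1 (by omega)
        have k2 : C2 = 0 := zeroIndex _ _ _ _ hrel2 (by omega)
        rw [k0, k1, k2, hC] at h3; simp at h3
      · obtain ⟨hC, hS⟩ := perIndex 1 A2 B2 C2 D2 le_rfl hA2n hB2n hrel2 (by omega) (by omega) hd2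
        have k0 : C0 = 0 := zeroIndex _ _ _ _ hrel0 (by omega)
        have k1 : C1 = 0 := zeroIndex _ _ _ _ hrel1 (by omega)
        have hA3z : A3 = 0 ∨ B3 = 0 := by
          rcases (by omega : a*A3 = 0 ∨ a*B3 = 0) with h | h
          · left; omega
          · right; omega
        have k3 : C3 = 0 := zeroIndex _ _ _ _ hrel3 hA3z
        rw [k0, k1, k3, hC] at h3; simp at h3
    · obtain ⟨hC, hS⟩ := perIndex 1 A1 B1 C1 D1 le_rfl hA1n hB1n hrel1 (by omega) (by omega) hd1
      have k0 : C0 = 0 := zeroIndex _ _ _ _ hrel0 (by omega)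
      have k2 : C2 = 0 := zeroIndex _ _ _ _ hrel2 (by omega)
      have hA3z : A3 = 0 ∨ B3 = 0 := by
        rcases (by omega : a*A3 = 0 ∨ a*B3 = 0) with h | h
        · left; omega
        · right; omega
      have k3 : C3 = 0 := zeroIndex _ _ _ _ hrel3 hA3z
      rw [k0, k2, k3, hC] at h3; simp at h3
  · obtain ⟨hC, hS⟩ := perIndex 1 A0 B0 C0 D0 le_rfl hA0n hB0n hrel0 (by omega) (by omega) hd0
    have k1 : C1 = 0 := zeroIndex _ _ _ _ hrel1 (by omega)
    have k2 : C2 = 0 := zeroIndex _ _ _ _ hrel2 (by omega)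
    have hA3z : A3 = 0 ∨ B3 = 0 := by
      rcases (by omega : a*A3 = 0 ∨ a*B3 = 0) with h | h
      · left; omega
      · right; omega
    have k3 : C3 = 0 := zeroIndex _ _ _ _ hrel3 hA3z
    rw [k1, k2, k3, hC] at h3; simp at h3

theorem binary_not_represented_by_111a (a : ℕ) (ha : 0 < a) :
    ¬∃ X : Matrix (Fin 2) (Fin 4) ℂ, (∀ i j, X i j ∈ ringO 2) ∧
      !![(2 : ℂ), -1 + omg 2; -1 - omg 2, 2]
        = X * Matrix.diagonal ![(1 : ℂ), 1, 1, (a : ℂ)] * Xᴴ := by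
  rintro ⟨X, hmem, hM⟩
  choose p q hX using fun i j => mem_ringO (X i j) (hmem i j)
  have h00 := congrFun (congrFun hM 0) 0
  have h11 := congrFun (congrFun hM 1) 1
  have h01 := congrFun (congrFun hM 0) 1
  simp [Matrix.mul_apply, Fin.sum_univ_four, hX, star_omg] at h00 h11 h01
  have e1 : ((p 0 0^2+2*(q 0 0)^2 + ((p 0 1)^2+2*(q 0 1)^2) + ((p 0 2)^2+2*(q 0 2)^2)
      + (a:ℤ)*((p 0 3)^2+2*(q 0 3)^2) - 2 : ℤ) : ℂ) + ((0:ℤ):ℂ) * omg 2 = 0 := by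
    push_cast
    linear_combination (-1:ℂ) * h00 + (((q 0 0:ℤ):ℂ)^2 + ((q 0 1:ℤ):ℂ)^2 + ((q 0 2:ℤ):ℂ)^2
      + ((a:ℕ):ℂ)*((q 0 3:ℤ):ℂ)^2) * omg_sq_s19
  have e2 : ((p 1 0^2+2*(q 1 0)^2 + ((p 1 1)^2+2*(q 1 1)^2) + ((p 1 2)^2+2*(q 1 2)^2)
      + (a:ℤ)*((p 1 3)^2+2*(q 1 3)^2) - 2 : ℤ) : ℂ) + ((0:ℤ):ℂ) * omg 2 = 0 := by
    push_cast
    linear_combination (-1:ℂ) * h11 + (((q 1 0:ℤ):ℂ)^2 + ((q 1 1:ℤ):ℂ)^2 + ((q 1 2:ℤ):ℂ)^2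
      + ((a:ℕ):ℂ)*((q 1 3:ℤ):ℂ)^2) * omg_sq_s19
  have e3 : ((p 0 0*p 1 0+2*(q 0 0*q 1 0) + (p 0 1*p 1 1+2*(q 0 1*q 1 1))
      + (p 0 2*p 1 2+2*(q 0 2*q 1 2)) + (a:ℤ)*(p 0 3*p 1 3+2*(q 0 3*q 1 3)) + 1 : ℤ) : ℂ)
      + ((q 0 0*p 1 0-p 0 0*q 1 0 + (q 0 1*p 1 1-p 0 1*q 1 1) + (q 0 2*p 1 2-p 0 2*q 1 2)
      + (a:ℤ)*(q 0 3*p 1 3-p 0 3*q 1 3) - 1 : ℤ):ℂ) * omg 2 = 0 := by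
    push_cast
    linear_combination (-1:ℂ) * h01 + (((q 0 0:ℤ):ℂ)*((q 1 0:ℤ):ℂ) + ((q 0 1:ℤ):ℂ)*((q 1 1:ℤ):ℂ)
      + ((q 0 2:ℤ):ℂ)*((q 1 2:ℤ):ℂ) + ((a:ℕ):ℂ)*((q 0 3:ℤ):ℂ)*((q 1 3:ℤ):ℂ)) * omg_sq_s19
  obtain ⟨k1, -⟩ := indep _ _ e1
  obtain ⟨k2, -⟩ := indep _ _ e2
  obtain ⟨k3, k4⟩ := indep _ _ e3
  exact main_int (a:ℤ) (by exact_mod_cast ha)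
    (p 0 0) (p 0 1) (p 0 2) (p 0 3) (q 0 0) (q 0 1) (q 0 2) (q 0 3)
    (p 1 0) (p 1 1) (p 1 2) (p 1 3) (q 1 0) (q 1 1) (q 1 2) (q 1 3)
    (by omega) (by omega) (by linarith [k3]) (by linarith [k4])
end
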